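/- Under the observable representation, for any t with Pr[x_{1:t}] > 0, the conditional observation probability satisfies Pr[x_t | x_1,…,x_{t-1}] = b_∞^T B_{x_t} b_t. -/

import Mathlib

open Matrix

/-- Unnormalized forward recursion: `fwd F v x t = F_{x_{t-1}} ⋯ F_{x_0} v`. -/
def fwd {m n : ℕ} (F : Fin n → Matrix (Fin m) (Fin m) ℝ) (v : Fin m → ℝ)
    (x : ℕ → Fin n) : ℕ → (Fin m → ℝ)
  | 0 => v
  | t + 1 => (F (x t)).mulVec (fwd F v x t)

/-- under the observable representation
(`b_1 = (Uᵀ O) π`, `b_∞ᵀ = 1ₘᵀ (Uᵀ O)⁻¹`, `B_x = (Uᵀ O) A_x (Uᵀ O)⁻¹`), for any `t` with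
`Pr[x_{1:t}] > 0`, the conditional probability
`Pr[x_t | x_1,…,x_{t-1}] = Pr[x_{1:t}] / Pr[x_{1:t-1}]` equals `b_∞ᵀ B_{x_t} b_t`,
where `b_t` is the normalized internal state. -/
theorem hmm_conditional_prob_observable_rep (m n : ℕ)
    (T : Matrix (Fin m) (Fin m) ℝ) (O : Matrix (Fin n) (Fin m) ℝ) (π : Fin m → ℝ)
    (hπ : ∀ i, 0 < π i) (hO : O.rank = m) (hT : T.rank = m)
    (U : Matrix (Fin n) (Fin m) ℝ) (hU : IsUnit (Uᵀ * O))
    (A B : Fin n → Matrix (Fin m) (Fin m) ℝ)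
    (hA : ∀ y, A y = T * Matrix.diagonal (fun i => O y i))
    (hB : ∀ y, B y = (Uᵀ * O) * A y * (Uᵀ * O)⁻¹)
    (b1 : Fin m → ℝ) (hb1 : b1 = (Uᵀ * O).mulVec π)
    (binf : Fin m → ℝ) (hbinf : binf = Matrix.vecMul (fun _ => (1 : ℝ)) (Uᵀ * O)⁻¹)
    (x : ℕ → Fin n)
    (hpos : ∀ t, 0 < dotProduct (fun _ => (1 : ℝ)) (fwd A π x t))
    (t : ℕ) :
    dotProduct (fun _ => (1 : ℝ)) (fwd A π x (t + 1))
        / dotProduct (fun _ => (1 : ℝ)) (fwd A π x t)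
      = dotProduct binf
          ((B (x t)).mulVec ((1 / dotProduct binf (fwd B b1 x t)) • fwd B b1 x t)) := by
  set M := Uᵀ * O with hM
  have hinv : M⁻¹ * M = 1 := nonsing_inv_mul M (isUnit_iff_isUnit_det M |>.mp hU)
  -- fwd B b1 = M.mulVec (fwd A π)
  have key : ∀ s, fwd B b1 x s = M.mulVec (fwd A π x s) := by
    intro s
    induction s with
    | zero => simpa [fwd] using hb1
    | succ s ih =>
        have hc : M⁻¹ *ᵥ (M *ᵥ fwd A π x s) = fwd A π x s := by
          rw [mulVec_mulVec, hinv, one_mulVec]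
        simp only [fwd, ih, hB, ← mulVec_mulVec, hc]
  -- binf ⬝ M.mulVec v = 1 ⬝ v
  have hcollapse : ∀ v : Fin m → ℝ,
      dotProduct binf (M.mulVec v) = dotProduct (fun _ => (1:ℝ)) v := by
    intro v
    rw [hbinf, dotProduct_mulVec, Matrix.vecMul_vecMul, hinv, Matrix.vecMul_one]
  have h1 : dotProduct binf (fwd B b1 x t)
      = dotProduct (fun _ => (1:ℝ)) (fwd A π x t) := by
    rw [key, hcollapse]
  have h2 : dotProduct binf ((B (x t)).mulVec (fwd B b1 x t))
      = dotProduct (fun _ => (1:ℝ)) (fwd A π x (t+1)) := by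
    have : (B (x t)).mulVec (fwd B b1 x t) = fwd B b1 x (t+1) := rfl
    rw [this, key, hcollapse]
  rw [mulVec_smul, dotProduct_smul, h1, h2, smul_eq_mul]
  field_simp
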